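/- arXiv:2405.16948 — 5 statements merged into one kernel-verified Lean document; each statement's English description precedes it below -/
import Mathlib

section
/- Let f ∈ Harm_d(n) and J ⊆ E = {1,...,n}. Define f^{(i)}(J) := ∑_{Z ∈ E_d, |J ∩ Z| = i} f(Z). Then for all 0 ≤ i ≤ d, f^{(i)}(J) = (-1)^{d-i} · C(d,i) · f̃(J), where f̃(J) = ∑_{Z ∈ E_d, Z ⊆ J} f(Z). -/
open Finset

noncomputable section
open scoped Classical

/-- `f ∈ Harm_d(n)`: a function on `d`-subsets of `{1,…,n}` is harmonic if for every
`(d-1)`-subset `Y`, the sum of `f` over the `d`-subsets containing `Y` vanishes. -/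
def IsHarmonic (n d : ℕ) (f : Finset (Fin n) → ℝ) : Prop :=
  ∀ Y : Finset (Fin n), Y.card + 1 = d →
    ∑ Z ∈ (Finset.powersetCard d (Finset.univ : Finset (Fin n))).filter (fun Z => Y ⊆ Z), f Z = 0

/-- `f̃(X) = ∑_{Z ∈ E_d, Z ⊆ X} f(Z)`. -/
def tildeF {n : ℕ} (d : ℕ) (f : Finset (Fin n) → ℝ) (X : Finset (Fin n)) : ℝ :=
  ∑ Z ∈ Finset.powersetCard d X, f Z

private lemma card_sandwich {α : Type*} [DecidableEq α] (Y Z : Finset α) (hYZ : Y ⊆ Z) (m : ℕ)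
    (hm : Y.card ≤ m) :
    ((Finset.powersetCard m Z).filter (fun Y' => Y ⊆ Y')).card
      = (Z.card - Y.card).choose (m - Y.card) := by
  rw [← Finset.card_sdiff_of_subset hYZ, ← Finset.card_powersetCard]
  apply Finset.card_bij' (fun Y' _ => Y' \ Y) (fun W _ => W ∪ Y)
  · intro Y' h
    simp only [Finset.mem_filter, Finset.mem_powersetCard] at h ⊢
    obtain ⟨⟨h1, h2⟩, h3⟩ := h
    exact ⟨Finset.sdiff_subset_sdiff h1 (le_refl _), by rw [Finset.card_sdiff_of_subset h3, h2]⟩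
  · intro W h
    simp only [Finset.mem_filter, Finset.mem_powersetCard] at h ⊢
    obtain ⟨h1, h2⟩ := h
    have hdisj : Disjoint W Y :=
      Finset.disjoint_left.2 fun x hx => (Finset.mem_sdiff.1 (h1 hx)).2
    refine ⟨⟨Finset.union_subset (h1.trans Finset.sdiff_subset) hYZ, ?_⟩, Finset.subset_union_right⟩
    rw [Finset.card_union_of_disjoint hdisj, h2]
    omega
  · intro Y' h
    simp only [Finset.mem_filter, Finset.mem_powersetCard] at h
    exact Finset.sdiff_union_of_subset h.2
  · intro W h
    simp only [Finset.mem_powersetCard] at h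
    have hdisj : Disjoint W Y :=
      Finset.disjoint_left.2 fun x hx => (Finset.mem_sdiff.1 (h.1 hx)).2
    rw [Finset.union_sdiff_distrib, Finset.sdiff_self, Finset.union_empty,
      Finset.sdiff_eq_self_of_disjoint hdisj]

private lemma alt_sum (k : ℕ) (hk : 1 ≤ k) :
    ∑ m ∈ Finset.range k, (-1:ℝ)^(k-m-1) * (k.choose (m+1) : ℝ) = -(-1:ℝ)^k := by
  have h0 : ∑ s ∈ Finset.range (k+1), (-1:ℝ)^s * (k.choose s : ℝ) = 0 := by
    have h := Int.alternating_sum_range_choose_of_ne (n := k) (by omega)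
    have h2 := congrArg (fun z : ℤ => (z : ℝ)) h
    push_cast at h2
    simpa using h2
  have h1 : ∀ m ∈ Finset.range k, (-1:ℝ)^(k-m-1) * (k.choose (m+1) : ℝ)
      = (-1:ℝ)^k * ((-1:ℝ)^(m+1) * (k.choose (m+1) : ℝ)) := by
    intro m hm
    rw [Finset.mem_range] at hm
    have hsq : ((-1:ℝ)^(m+1)) * ((-1:ℝ)^(m+1)) = 1 := by rw [← mul_pow]; norm_num
    have hkey : (-1:ℝ)^(k-m-1) = (-1:ℝ)^k * (-1:ℝ)^(m+1) := by
      calc (-1:ℝ)^(k-m-1) = (-1:ℝ)^(k-m-1) * (((-1:ℝ)^(m+1)) * ((-1:ℝ)^(m+1))) := by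
            rw [hsq, mul_one]
        _ = ((-1:ℝ)^((k-m-1)+(m+1))) * (-1:ℝ)^(m+1) := by rw [pow_add]; ring
        _ = (-1:ℝ)^k * (-1:ℝ)^(m+1) := by congr 2; omega
    rw [hkey]; ring
  rw [Finset.sum_congr rfl h1, ← Finset.mul_sum]
  have h2 : ∑ m ∈ Finset.range k, (-1:ℝ)^(m+1) * (k.choose (m+1) : ℝ) = -1 := by
    have := Finset.sum_range_succ' (fun s => (-1:ℝ)^s * (k.choose s : ℝ)) k
    rw [h0] at this
    simp only [pow_zero, one_mul, Nat.choose_zero_right, Nat.cast_one] at this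
    linarith
  rw [h2]; ring

private lemma swap_sum {n : ℕ} (d : ℕ) (f : Finset (Fin n) → ℝ) (P : Finset (Finset (Fin n))) :
    ∑ Y ∈ P, ∑ Z ∈ (Finset.powersetCard d (Finset.univ : Finset (Fin n))).filter
        (fun Z => Y ⊆ Z), f Z
      = ∑ Z ∈ Finset.powersetCard d (Finset.univ : Finset (Fin n)),
          ((P.filter (fun Y => Y ⊆ Z)).card : ℝ) * f Z := by
  simp_rw [Finset.sum_filter]
  rw [Finset.sum_comm]
  congr 1
  ext Z
  rw [← Finset.sum_filter, Finset.sum_const, nsmul_eq_mul]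

private lemma harm_zero {n d : ℕ} {f : Finset (Fin n) → ℝ} (hf : IsHarmonic n d f) :
    ∀ k : ℕ, ∀ Y : Finset (Fin n), Y.card + (k + 1) = d →
      ∑ Z ∈ (Finset.powersetCard d (Finset.univ : Finset (Fin n))).filter
        (fun Z => Y ⊆ Z), f Z = 0 := by
  intro k
  induction k with
  | zero => exact fun Y hY => hf Y hY
  | succ k ih =>
    intro Y hY
    set P := (Finset.powersetCard (Y.card + 1) (Finset.univ : Finset (Fin n))).filter
        (fun Y' => Y ⊆ Y') with hP
    have h1 : ∑ Y' ∈ P, ∑ Z ∈ (Finset.powersetCard d (Finset.univ : Finset (Fin n))).filter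
        (fun Z => Y' ⊆ Z), f Z = 0 := by
      apply Finset.sum_eq_zero
      intro Y' hY'
      rw [hP, Finset.mem_filter, Finset.mem_powersetCard] at hY'
      exact ih Y' (by omega)
    rw [swap_sum] at h1
    have h2 : ∀ Z ∈ Finset.powersetCard d (Finset.univ : Finset (Fin n)),
        ((P.filter (fun Y' => Y' ⊆ Z)).card : ℝ) * f Z
          = (k + 2 : ℝ) * (if Y ⊆ Z then f Z else 0) := by
      intro Z hZ
      rw [Finset.mem_powersetCard] at hZ
      by_cases hYZ : Y ⊆ Z
      · rw [if_pos hYZ]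
        congr 1
        have hfe : P.filter (fun Y' => Y' ⊆ Z)
            = (Finset.powersetCard (Y.card + 1) Z).filter (fun Y' => Y ⊆ Y') := by
          rw [hP]
          ext Y'
          simp only [Finset.mem_filter, Finset.mem_powersetCard]
          refine ⟨fun h => ?_, fun h => ?_⟩
          · exact ⟨⟨h.2, h.1.1.2⟩, h.1.2⟩
          · exact ⟨⟨⟨Finset.subset_univ _, h.1.2⟩, h.2⟩, h.1.1⟩
        rw [hfe, card_sandwich Y Z hYZ _ (by omega), hZ.2]
        have hdk : d - Y.card = k + 2 := by omega
        rw [hdk]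
        simp
      · rw [if_neg hYZ]
        have he : P.filter (fun Y' => Y' ⊆ Z) = ∅ := by
          rw [Finset.filter_eq_empty_iff]
          intro Y' hY'
          rw [hP, Finset.mem_filter] at hY'
          exact fun hc => hYZ (hY'.2.trans hc)
        rw [he]
        simp
    rw [Finset.sum_congr rfl h2, ← Finset.mul_sum, ← Finset.sum_filter] at h1
    have hne : (k + 2 : ℝ) ≠ 0 := by positivity
    exact (mul_eq_zero.1 h1).resolve_left hne

/-- Bachoc's lemma: `f^{(i)}(J) = (-1)^{d-i} C(d,i) f̃(J)` for `0 ≤ i ≤ d`, where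
`f^{(i)}(J) = ∑_{Z ∈ E_d, |J ∩ Z| = i} f(Z)`. -/
theorem stmt5 {n : ℕ} (d : ℕ) (f : Finset (Fin n) → ℝ) (hf : IsHarmonic n d f)
    (J : Finset (Fin n)) (i : ℕ) (hi : i ≤ d) :
    ∑ Z ∈ (Finset.powersetCard d (Finset.univ : Finset (Fin n))).filter
        (fun Z => (J ∩ Z).card = i), f Z =
      (-1 : ℝ) ^ (d - i) * (d.choose i : ℝ) * tildeF d f J := by
  set g : ℕ → ℝ := fun i => ∑ Z ∈ (Finset.powersetCard d
      (Finset.univ : Finset (Fin n))).filter (fun Z => (J ∩ Z).card = i), f Z with hg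
  -- equation (A)
  have hA : ∀ j, j < d → ∑ i' ∈ Finset.range (d+1), ((i'.choose j : ℕ) : ℝ) * g i' = 0 := by
    intro j hj
    -- T(j) = 0 via harm_zero
    have hT : ∑ Y ∈ Finset.powersetCard j J,
        ∑ Z ∈ (Finset.powersetCard d (Finset.univ : Finset (Fin n))).filter
          (fun Z => Y ⊆ Z), f Z = 0 := by
      apply Finset.sum_eq_zero
      intro Y hY
      rw [Finset.mem_powersetCard] at hY
      exact harm_zero hf (d - j - 1) Y (by omega)
    rw [swap_sum] at hT
    -- rewrite counts
    have hc : ∀ Z ∈ Finset.powersetCard d (Finset.univ : Finset (Fin n)),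
        (((Finset.powersetCard j J).filter (fun Y => Y ⊆ Z)).card : ℝ) * f Z
          = (((J ∩ Z).card.choose j : ℕ) : ℝ) * f Z := by
      intro Z _
      congr 2
      have hfe : (Finset.powersetCard j J).filter (fun Y => Y ⊆ Z)
          = Finset.powersetCard j (J ∩ Z) := by
        ext Y
        simp only [Finset.mem_filter, Finset.mem_powersetCard, Finset.subset_inter_iff]
        tauto
      rw [hfe, Finset.card_powersetCard]
    rw [Finset.sum_congr rfl hc] at hT
    -- fiberwise
    have hmap : ∀ Z ∈ Finset.powersetCard d (Finset.univ : Finset (Fin n)),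
        (J ∩ Z).card ∈ Finset.range (d+1) := by
      intro Z hZ
      rw [Finset.mem_powersetCard] at hZ
      rw [Finset.mem_range]
      have := Finset.card_le_card (Finset.inter_subset_right : J ∩ Z ⊆ Z)
      omega
    have hfib := Finset.sum_fiberwise_of_maps_to hmap
      (fun Z => (((J ∩ Z).card.choose j : ℕ) : ℝ) * f Z)
    rw [← hfib] at hT
    rw [← hT]
    apply Finset.sum_congr rfl
    intro i' _
    rw [hg, Finset.mul_sum]
    apply Finset.sum_congr rfl
    intro Z hZ
    rw [Finset.mem_filter] at hZ
    rw [hZ.2]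
  -- g d = tildeF
  have hB : g d = tildeF d f J := by
    rw [hg, tildeF]
    apply Finset.sum_congr _ (fun _ _ => rfl)
    ext Z
    simp only [Finset.mem_filter, Finset.mem_powersetCard]
    constructor
    · rintro ⟨⟨-, hZd⟩, hJZ⟩
      have hsub : J ∩ Z ⊆ Z := Finset.inter_subset_right
      have : J ∩ Z = Z := Finset.eq_of_subset_of_card_le hsub (by omega)
      exact ⟨(Finset.inter_eq_right.1 this), hZd⟩
    · rintro ⟨hZJ, hZd⟩
      refine ⟨⟨Finset.subset_univ _, hZd⟩, ?_⟩
      rw [Finset.inter_eq_right.2 hZJ, hZd]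
  -- main downward induction
  have claim : ∀ k : ℕ, ∀ i' : ℕ, i' + k = d → g i' = (-1:ℝ)^k * (d.choose i' : ℝ) * g d := by
    intro k
    induction k using Nat.strong_induction_on with
    | _ k ih =>
      intro i' hik
      rcases Nat.eq_zero_or_pos k with hk0 | hk1
      · subst hk0
        have : i' = d := by omega
        subst this
        simp
      · have hid : i' < d := by omega
        have h := hA i' hid
        rw [Finset.range_eq_Ico, ← Finset.sum_Ico_consecutive _ (Nat.zero_le i')
          (by omega : i' ≤ d + 1)] at h
        have hz : ∑ x ∈ Finset.Ico 0 i', ((x.choose i' : ℕ) : ℝ) * g x = 0 := by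
          apply Finset.sum_eq_zero
          intro x hx
          rw [Finset.mem_Ico] at hx
          rw [Nat.choose_eq_zero_of_lt hx.2]
          simp
        rw [hz, zero_add, Finset.sum_Ico_eq_sum_range,
          (show d + 1 - i' = k + 1 by omega), Finset.sum_range_succ'] at h
        simp only [Nat.add_zero, Nat.choose_self, Nat.cast_one, one_mul] at h
        -- rewrite each summand via ih
        have hterm : ∀ m ∈ Finset.range k,
            (((i' + (m+1)).choose i' : ℕ) : ℝ) * g (i' + (m+1))
              = ((-1:ℝ)^(k-m-1) * (k.choose (m+1) : ℝ)) * ((d.choose i' : ℝ) * g d) := by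
          intro m hm
          rw [Finset.mem_range] at hm
          rw [ih (k-m-1) (by omega) (i' + (m+1)) (by omega)]
          have hcc : d.choose (i' + (m+1)) * (i' + (m+1)).choose i'
              = d.choose i' * k.choose (m+1) := by
            have h3 := Nat.choose_mul (n := d)
              (show i' ≤ i' + (m+1) by omega)
            rw [(show i' + (m+1) - i' = m + 1 by omega), (show d - i' = k by omega)] at h3
            exact h3
          have hcast : ((i' + (m+1)).choose i' : ℝ) * (d.choose (i' + (m+1)) : ℝ)
              = (d.choose i' : ℝ) * (k.choose (m+1) : ℝ) := by
            rw [mul_comm]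
            exact_mod_cast congrArg (Nat.cast : ℕ → ℝ) hcc
          calc (((i' + (m+1)).choose i' : ℕ) : ℝ)
              * ((-1:ℝ)^(k-m-1) * ((d.choose (i' + (m+1)) : ℕ) : ℝ) * g d)
              = ((-1:ℝ)^(k-m-1) * g d) * (((i' + (m+1)).choose i' : ℝ)
                  * (d.choose (i' + (m+1)) : ℝ)) := by ring
            _ = ((-1:ℝ)^(k-m-1) * (k.choose (m+1) : ℝ)) * ((d.choose i' : ℝ) * g d) := by
                rw [hcast]; ring
        rw [Finset.sum_congr rfl hterm, ← Finset.sum_mul, alt_sum k hk1] at h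
        linear_combination h
  have := claim (d - i) i (by omega)
  rw [hB] at this
  exact this
end
end

section
/- Let f ∈ Harm_d(n) and J ⊆ E = {1,...,n}. Then f̃(J) = (-1)^d · f̃(E \ J). In particular, if |J| < d or |J| > n - d, then f̃(J) = 0. -/
open Finset

noncomputable section
open scoped Classical

lemma harm_aux {n : ℕ} (d : ℕ) (f : Finset (Fin n) → ℝ) (hf : IsHarmonic n d f) :
    ∀ (m : ℕ) (Y : Finset (Fin n)), Y.card + (m + 1) = d →
      ∑ Z ∈ (Finset.powersetCard d (Finset.univ : Finset (Fin n))).filter (fun Z => Y ⊆ Z), f Z = 0 := by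
  intro m
  induction m with
  | zero => intro Y hY; exact hf Y hY
  | succ m ih =>
    intro Y hY
    have key : ∑ x ∈ univ \ Y,
        ∑ Z ∈ (Finset.powersetCard d (Finset.univ : Finset (Fin n))).filter (fun Z => insert x Y ⊆ Z), f Z
        = ((m + 2 : ℕ) : ℝ) *
          ∑ Z ∈ (Finset.powersetCard d (Finset.univ : Finset (Fin n))).filter (fun Z => Y ⊆ Z), f Z := by
      simp_rw [Finset.sum_filter]
      rw [Finset.sum_comm]
      rw [Finset.mul_sum]
      refine Finset.sum_congr rfl fun Z hZ => ?_
      have hZd : Z.card = d := (Finset.mem_powersetCard.mp hZ).2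
      by_cases hYZ : Y ⊆ Z
      · have hiff : ∀ x, x ∈ univ \ Y → ((insert x Y ⊆ Z) ↔ x ∈ Z) := by
          intro x hx
          constructor
          · intro h; exact h (mem_insert_self x Y)
          · intro h; exact insert_subset h hYZ
        calc ∑ x ∈ univ \ Y, (if insert x Y ⊆ Z then f Z else 0)
            = ∑ x ∈ univ \ Y, (if x ∈ Z then f Z else 0) := by
              refine Finset.sum_congr rfl fun x hx => ?_
              rw [if_congr (hiff x hx) rfl rfl]
          _ = ((Z \ Y).card : ℝ) * f Z := by
              rw [Finset.sum_ite_mem]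
              have : (univ \ Y) ∩ Z = Z \ Y := by
                ext a; simp [mem_sdiff, mem_inter, and_comm]
              rw [this, Finset.sum_const, nsmul_eq_mul]
          _ = ((m + 2 : ℕ) : ℝ) * (if Y ⊆ Z then f Z else 0) := by
              rw [if_pos hYZ, Finset.card_sdiff_of_subset hYZ, hZd]
              congr 2
              omega
      · have : ∀ x ∈ univ \ Y, ¬ (insert x Y ⊆ Z) := by
          intro x hx h
          exact hYZ ((Finset.subset_insert x Y).trans h)
        rw [Finset.sum_congr rfl (fun x hx => if_neg (this x hx)), if_neg hYZ]
        simp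
    have hz : ∑ x ∈ univ \ Y,
        ∑ Z ∈ (Finset.powersetCard d (Finset.univ : Finset (Fin n))).filter (fun Z => insert x Y ⊆ Z), f Z = 0 := by
      refine Finset.sum_eq_zero fun x hx => ?_
      have hxY : x ∉ Y := (mem_sdiff.mp hx).2
      exact ih (insert x Y) (by rw [Finset.card_insert_of_notMem hxY]; omega)
    rw [key] at hz
    have : ((m + 2 : ℕ) : ℝ) ≠ 0 := by positivity
    exact (mul_eq_zero.mp hz).resolve_left this

lemma real_sum_powerset {α : Type*} [DecidableEq α] (s : Finset α) :
    ∑ t ∈ s.powerset, (-1 : ℝ) ^ t.card = if s = ∅ then 1 else 0 := by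
  have h := Finset.sum_powerset_neg_one_pow_card (x := s)
  calc ∑ t ∈ s.powerset, (-1 : ℝ) ^ t.card
      = ((∑ t ∈ s.powerset, (-1 : ℤ) ^ t.card : ℤ) : ℝ) := by push_cast; rfl
    _ = _ := by rw [h]; split_ifs <;> simp

lemma main_id {n : ℕ} (d : ℕ) (f : Finset (Fin n) → ℝ) (hf : IsHarmonic n d f)
    (J : Finset (Fin n)) :
    tildeF d f (Finset.univ \ J) = (-1 : ℝ) ^ d * tildeF d f J := by
  have hA : Finset.powersetCard d ((univ : Finset (Fin n)) \ J)
      = (Finset.powersetCard d (univ : Finset (Fin n))).filter (fun Z => Z ∩ J = ∅) := by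
    ext Z
    simp only [Finset.mem_powersetCard, Finset.mem_filter, Finset.subset_sdiff,
      ← Finset.disjoint_iff_inter_eq_empty]
    tauto
  rw [tildeF, hA, Finset.sum_filter]
  calc ∑ Z ∈ Finset.powersetCard d (univ : Finset (Fin n)), (if Z ∩ J = ∅ then f Z else 0)
      = ∑ Z ∈ Finset.powersetCard d (univ : Finset (Fin n)),
          ∑ Y ∈ (Z ∩ J).powerset, f Z * (-1 : ℝ) ^ Y.card := by
        refine Finset.sum_congr rfl fun Z _ => ?_
        rw [← Finset.mul_sum, real_sum_powerset]
        split_ifs <;> simp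
    _ = ∑ Z ∈ Finset.powersetCard d (univ : Finset (Fin n)),
          ∑ Y ∈ J.powerset, (if Y ⊆ Z then f Z * (-1 : ℝ) ^ Y.card else 0) := by
        refine Finset.sum_congr rfl fun Z _ => ?_
        rw [← Finset.sum_filter]
        refine Finset.sum_congr ?_ fun _ _ => rfl
        ext Y
        simp only [Finset.mem_powerset, Finset.mem_filter, Finset.subset_inter_iff]
        tauto
    _ = ∑ Y ∈ J.powerset, (-1 : ℝ) ^ Y.card *
          ∑ Z ∈ (Finset.powersetCard d (univ : Finset (Fin n))).filter (fun Z => Y ⊆ Z), f Z := by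
        rw [Finset.sum_comm]
        refine Finset.sum_congr rfl fun Y _ => ?_
        rw [Finset.sum_filter, Finset.mul_sum]
        refine Finset.sum_congr rfl fun Z _ => ?_
        split_ifs <;> ring
    _ = ∑ Y ∈ J.powerset, (if Y.card = d then (-1 : ℝ) ^ d * f Y else 0) := by
        refine Finset.sum_congr rfl fun Y hY => ?_
        rcases lt_trichotomy Y.card d with h | h | h
        · rw [if_neg h.ne, harm_aux d f hf (d - Y.card - 1) Y (by omega), mul_zero]
        · rw [if_pos h]
          have : (Finset.powersetCard d (univ : Finset (Fin n))).filter (fun Z => Y ⊆ Z) = {Y} := by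
            ext Z
            simp only [Finset.mem_filter, Finset.mem_powersetCard, Finset.mem_singleton]
            constructor
            · rintro ⟨⟨-, hc⟩, hs⟩
              exact (Finset.eq_of_subset_of_card_le hs (by omega)).symm
            · rintro rfl
              exact ⟨⟨Finset.subset_univ _, h⟩, Finset.Subset.refl _⟩
          rw [this, Finset.sum_singleton, h]
        · rw [if_neg h.ne']
          have : (Finset.powersetCard d (univ : Finset (Fin n))).filter (fun Z => Y ⊆ Z) = ∅ := by
            ext Z
            simp only [Finset.mem_filter, Finset.mem_powersetCard, Finset.notMem_empty, iff_false]
            rintro ⟨⟨-, hc⟩, hs⟩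
            exact absurd (Finset.card_le_card hs) (by omega)
          rw [this, Finset.sum_empty, mul_zero]
    _ = (-1 : ℝ) ^ d * tildeF d f J := by
        rw [← Finset.sum_filter, tildeF, Finset.mul_sum]
        refine Finset.sum_congr ?_ fun _ _ => rfl
        rw [Finset.powersetCard_eq_filter]

/-- For `f ∈ Harm_d(n)`, `f̃(J) = (-1)^d f̃(E \ J)`; in particular `f̃(J) = 0` whenever
`|J| < d` or `|J| > n - d`. -/
theorem stmt6 {n : ℕ} (d : ℕ) (f : Finset (Fin n) → ℝ) (hf : IsHarmonic n d f)
    (J : Finset (Fin n)) :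
    tildeF d f J = (-1 : ℝ) ^ d * tildeF d f (Finset.univ \ J) ∧
      ((J.card < d ∨ n - d < J.card) → tildeF d f J = 0) := by
  have hB := main_id d f hf J
  have h1 : tildeF d f J = (-1 : ℝ) ^ d * tildeF d f (Finset.univ \ J) := by
    rw [hB, ← mul_assoc, ← mul_pow]
    norm_num
  refine ⟨h1, ?_⟩
  intro h
  by_cases hlt : J.card < d
  · rw [tildeF, Finset.powersetCard_eq_empty.mpr hlt, Finset.sum_empty]
  · have hJn : J.card ≤ n := by
      have := Finset.card_le_card (Finset.subset_univ J)
      simpa using this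
    have h2 : ((Finset.univ : Finset (Fin n)) \ J).card < d := by
      rw [Finset.card_sdiff_of_subset (Finset.subset_univ J), Finset.card_univ, Fintype.card_fin]
      omega
    rw [h1, tildeF, Finset.powersetCard_eq_empty.mpr h2, Finset.sum_empty, mul_zero]
end
end

section
/- Let C be an [n,k] code over F_q and f ∈ Harm_d(n). With Z_{C,f}^{(r)}(x,y) := ∑_{i=d}^{n-d} A_{i,f}^{(r)}(C) x^{n-i-d} y^{i-d} and B_{t,f}^{(r)}(C) as above, we have Z_{C,f}^{(r)}(x,y) = (-1)^d · ∑_{t=d}^{n-d} B_{t,f}^{(r)}(C) (x-y)^{t-d} y^{n-t-d}. -/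
open Finset

noncomputable section
open scoped Classical

variable {n : ℕ}

instance (F : Type*) [Field F] [Fintype F] : Fintype (Submodule F (Fin n → F)) :=
  Fintype.ofFinite _

/-- `C(X)`, the subcode of codewords of `C` vanishing on `X`. -/
def codeVanish (F : Type*) [Field F] [Fintype F] (C : Submodule F (Fin n → F))
    (X : Finset (Fin n)) : Submodule F (Fin n → F) :=
  C ⊓ Submodule.pi (X : Set (Fin n)) (fun _ => ⊥)

/-- `ℓ(X) = dim C(X)`. -/
def ellDim (F : Type*) [Field F] [Fintype F] (C : Submodule F (Fin n → F))
    (X : Finset (Fin n)) : ℕ :=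
  Module.finrank F ↥(codeVanish F C X)

/-- `Supp(D)`, the support of a subcode `D`. -/
def codeSupp (F : Type*) [Field F] [Fintype F] (D : Submodule F (Fin n → F)) :
    Finset (Fin n) :=
  Finset.univ.filter (fun i => ∃ u ∈ D, u i ≠ 0)

/-- The number of `r`-dimensional subspaces of the code `C`. -/
def subCount (F : Type*) [Field F] [Fintype F] (C : Submodule F (Fin n → F)) (r : ℕ) : ℕ :=
  (Finset.univ.filter (fun D : Submodule F (Fin n → F) =>
    D ≤ C ∧ Module.finrank F ↥D = r)).card

/-- `A_{i,f}^{(r)}(C) = ∑_{D ∈ D_r(C), wt(D) = i} f̃(Supp D)`. -/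
def Ahigher (F : Type*) [Field F] [Fintype F] (C : Submodule F (Fin n → F))
    (f : Finset (Fin n) → ℝ) (d r i : ℕ) : ℝ :=
  ∑ D ∈ Finset.univ.filter (fun D : Submodule F (Fin n → F) =>
      D ≤ C ∧ Module.finrank F ↥D = r ∧ (codeSupp F D).card = i),
    tildeF d f (codeSupp F D)

/-- `B_{t,f}^{(r)}(C) = ∑_{X ∈ E_t} f̃(X) · B_X^{(r)}(C)`. -/
def Bhigher (F : Type*) [Field F] [Fintype F] (C : Submodule F (Fin n → F))
    (f : Finset (Fin n) → ℝ) (d r t : ℕ) : ℝ :=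
  ∑ X ∈ Finset.powersetCard t (Finset.univ : Finset (Fin n)),
    tildeF d f X * (subCount F (codeVanish F C X) r : ℝ)

/-- `Z_{C,f}^{(r)}(x,y) = ∑_{i=d}^{n-d} A_{i,f}^{(r)}(C) x^{n-i-d} y^{i-d}`. -/
def Zhigher (F : Type*) [Field F] [Fintype F] (C : Submodule F (Fin n → F))
    (f : Finset (Fin n) → ℝ) (d r : ℕ) (x y : ℝ) : ℝ :=
  ∑ i ∈ Finset.Icc d (n - d), Ahigher F C f d r i * x ^ (n - i - d) * y ^ (i - d)

/-- The dual code `C⊥`. -/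
def dualCode (F : Type*) [Field F] [Fintype F] (C : Submodule F (Fin n → F)) :
    Submodule F (Fin n → F) where
  carrier := {u | ∀ v ∈ C, ∑ i, u i * v i = 0}
  add_mem' := by
    intro a b ha hb v hv
    simp only [Set.mem_setOf_eq] at *
    simp [Pi.add_apply, add_mul, Finset.sum_add_distrib, ha v hv, hb v hv]
  zero_mem' := by intro v hv; simp
  smul_mem' := by
    intro c a ha v hv
    simp only [Set.mem_setOf_eq] at *
    simp [smul_eq_mul, mul_assoc, ← Finset.mul_sum, ha v hv]

/-- The extension code `C ⊗ F_{q^m}`, i.e. the `K`-span of (the embedding of) `C`. -/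
def extCode (F : Type*) [Field F] [Fintype F] (K : Type*) [CommRing K] [Algebra F K]
    (C : Submodule F (Fin n → F)) : Submodule K (Fin n → K) :=
  Submodule.span K
    ((fun (u : Fin n → F) (j : Fin n) => algebraMap F K (u j)) '' (C : Set (Fin n → F)))

/-- The support of a vector. -/
def vsupp {n : ℕ} {K : Type*} [CommRing K] (u : Fin n → K) : Finset (Fin n) :=
  Finset.univ.filter (fun j => u j ≠ 0)

/-- `A_{i,f}^{q^m}(C) = ∑_{u ∈ C[q^m], wt(u) = i} f̃(supp u)`. -/
def Aext (F : Type*) [Field F] [Fintype F] (K : Type*) [CommRing K] [Fintype K] [Algebra F K]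
    (C : Submodule F (Fin n → F)) (f : Finset (Fin n) → ℝ) (d i : ℕ) : ℝ :=
  ∑ u ∈ Finset.univ.filter (fun u : Fin n → K =>
      u ∈ extCode F K C ∧ (vsupp u).card = i),
    tildeF d f (vsupp u)

/-- `Z_{C,f}(x,y;q^m) = ∑_{i=d}^{n-d} A_{i,f}^{q^m}(C) x^{n-i-d} y^{i-d}`. -/
def Zext (F : Type*) [Field F] [Fintype F] (K : Type*) [CommRing K] [Fintype K] [Algebra F K]
    (C : Submodule F (Fin n → F)) (f : Finset (Fin n) → ℝ) (d : ℕ) (x y : ℝ) : ℝ :=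
  ∑ i ∈ Finset.Icc d (n - d), Aext F K C f d i * x ^ (n - i - d) * y ^ (i - d)


section Helpers
variable {n : ℕ}

lemma aux_pcc (j : ℕ) (U Z : Finset (Fin n)) (hZ : Z ⊆ U) :
    (powersetCard j U).filter (· ⊆ Z) = powersetCard j Z := by
  ext W
  simp only [Finset.mem_filter, Finset.mem_powersetCard]
  exact ⟨fun h => ⟨h.2, h.1.2⟩, fun h => ⟨⟨h.1.trans hZ, h.2⟩, h.1⟩⟩

lemma total_zero (d : ℕ) (hd : 1 ≤ d) (U : Finset (Fin n)) (f : Finset (Fin n) → ℝ)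
    (hf : ∀ Y ⊆ U, Y.card + 1 = d →
      ∑ Z ∈ (powersetCard d U).filter (fun Z => Y ⊆ Z), f Z = 0) :
    ∑ Z ∈ powersetCard d U, f Z = 0 := by
  obtain ⟨e, rfl⟩ : ∃ e, d = e + 1 := ⟨d - 1, by omega⟩
  have key : ∑ Y ∈ powersetCard e U,
      ∑ Z ∈ (powersetCard (e+1) U).filter (fun Z => Y ⊆ Z), f Z = 0 := by
    apply Finset.sum_eq_zero
    intro Y hY
    rw [Finset.mem_powersetCard] at hY
    exact hf Y hY.1 (by omega)
  have key2 : ∑ Y ∈ powersetCard e U,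
      ∑ Z ∈ (powersetCard (e+1) U).filter (fun Z => Y ⊆ Z), f Z
      = ((e+1 : ℕ) : ℝ) * ∑ Z ∈ powersetCard (e+1) U, f Z := by
    simp only [Finset.sum_filter]
    rw [Finset.sum_comm, Finset.mul_sum]
    apply Finset.sum_congr rfl
    intro Z hZ
    rw [Finset.mem_powersetCard] at hZ
    have h2 : ∑ Y ∈ powersetCard e U, (if Y ⊆ Z then f Z else 0)
        = ∑ Y ∈ (powersetCard e U).filter (· ⊆ Z), f Z := by
      rw [Finset.sum_filter]
    rw [h2, aux_pcc _ _ _ hZ.1, Finset.sum_const, Finset.card_powersetCard, hZ.2,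
      Nat.choose_succ_self_right]
    simp [mul_comm]
  rw [key2] at key
  have : ((e+1 : ℕ) : ℝ) ≠ 0 := by positivity
  exact (mul_eq_zero.mp key).resolve_left this

lemma erase_reindex (d : ℕ) (U : Finset (Fin n)) (a : Fin n) (ha : a ∈ U)
    (p : Finset (Fin n) → Prop) (f : Finset (Fin n) → ℝ) :
    ∑ Z ∈ (powersetCard (d+1) U).filter (fun Z => a ∈ Z ∧ p (Z.erase a)), f Z
      = ∑ W ∈ (powersetCard d (U.erase a)).filter p, f (insert a W) := by
  apply Finset.sum_nbij' (fun Z => Z.erase a) (fun W => insert a W)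
  · intro Z hZ
    simp only [Finset.mem_filter, Finset.mem_powersetCard] at *
    exact ⟨⟨Finset.erase_subset_erase a hZ.1.1, by
      rw [Finset.card_erase_of_mem hZ.2.1, hZ.1.2]; rfl⟩, hZ.2.2⟩
  · intro W hW
    simp only [Finset.mem_filter, Finset.mem_powersetCard] at *
    have haW : a ∉ W := fun h => (Finset.mem_erase.mp (hW.1.1 h)).1 rfl
    refine ⟨⟨Finset.insert_subset ha (hW.1.1.trans (Finset.erase_subset _ _)), ?_⟩,
      Finset.mem_insert_self _ _, ?_⟩
    · rw [Finset.card_insert_of_notMem haW, hW.1.2]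
    · rw [Finset.erase_insert haW]; exact hW.2
  · intro Z hZ
    simp only [Finset.mem_filter] at hZ
    exact Finset.insert_erase hZ.2.1
  · intro W hW
    simp only [Finset.mem_filter, Finset.mem_powersetCard] at hW
    have haW : a ∉ W := fun h => (Finset.mem_erase.mp (hW.1.1 h)).1 rfl
    exact Finset.erase_insert haW
  · intro Z hZ
    simp only [Finset.mem_filter] at hZ
    rw [Finset.insert_erase hZ.2.1]

lemma harm_key : ∀ (d : ℕ) (U : Finset (Fin n)) (f : Finset (Fin n) → ℝ),
    (∀ Y ⊆ U, Y.card + 1 = d →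
      ∑ Z ∈ (powersetCard d U).filter (fun Z => Y ⊆ Z), f Z = 0) →
    ∀ S, S ⊆ U →
    ∑ Z ∈ (powersetCard d U).filter (fun Z => Disjoint Z S), f Z
      = (-1 : ℝ) ^ d * ∑ Z ∈ powersetCard d S, f Z := by
  intro d
  induction d with
  | zero =>
    intro U f _ S _
    rw [Finset.powersetCard_zero, Finset.powersetCard_zero, Finset.filter_singleton,
      if_pos (Finset.disjoint_empty_left S)]
    simp
  | succ d ih =>
    intro U f hf S
    induction S using Finset.induction_on with
    | empty =>
      intro _
      have h1 : (powersetCard (d+1) U).filter (fun Z => Disjoint Z (∅ : Finset (Fin n)))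
          = powersetCard (d+1) U :=
        Finset.filter_true_of_mem (fun Z _ => Finset.disjoint_empty_right Z)
      have h2 : powersetCard (d+1) (∅ : Finset (Fin n)) = ∅ := by
        rw [Finset.powersetCard_eq_empty]; simp
      rw [h1, h2, total_zero (d+1) (by omega) U f hf]
      simp
    | @insert a S haS IH =>
      intro hS
      have haU : a ∈ U := hS (Finset.mem_insert_self a S)
      have hSU : S ⊆ U := (Finset.subset_insert a S).trans hS
      have haS' : a ∉ S := haS
      have split : ∑ Z ∈ (powersetCard (d+1) U).filter (fun Z => Disjoint Z S), f Z
          = ∑ Z ∈ (powersetCard (d+1) U).filter (fun Z => Disjoint Z (insert a S)), f Z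
            + ∑ Z ∈ (powersetCard (d+1) U).filter (fun Z => a ∈ Z ∧ Disjoint (Z.erase a) S), f Z := by
        rw [← Finset.sum_filter_add_sum_filter_not
          ((powersetCard (d+1) U).filter (fun Z => Disjoint Z S)) (fun Z => a ∉ Z)]
        congr 1
        · rw [Finset.filter_filter]
          apply Finset.sum_congr _ (fun _ _ => rfl)
          apply Finset.filter_congr
          intro Z _
          simp only [Finset.disjoint_insert_right]
          tauto
        · rw [Finset.filter_filter]
          apply Finset.sum_congr _ (fun _ _ => rfl)
          apply Finset.filter_congr
          intro Z _
          constructor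
          · rintro ⟨h1, h2⟩
            rw [not_not] at h2
            refine ⟨h2, ?_⟩
            exact Finset.disjoint_of_subset_left (Finset.erase_subset _ _) h1
          · rintro ⟨h1, h2⟩
            refine ⟨?_, not_not.mpr h1⟩
            rw [Finset.disjoint_left]
            intro i hi his
            rcases Finset.mem_erase.mpr ⟨fun h => haS' (by rwa [h] at his), hi⟩ with hie
            exact (Finset.disjoint_left.mp h2) hie his
      have part2 : ∑ Z ∈ (powersetCard (d+1) U).filter (fun Z => a ∈ Z ∧ Disjoint (Z.erase a) S), f Z
          = (-1:ℝ)^d * ∑ W ∈ powersetCard d S, f (insert a W) := by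
        have er := erase_reindex d U a haU (fun W => Disjoint W S) f
        refine Eq.trans ?_ (er.trans ?_)
        · exact Finset.sum_congr (by congr!) (fun _ _ => rfl)
        refine Eq.trans (Finset.sum_congr (by congr!) (fun _ _ => rfl))
          (ih (U.erase a) (fun W => f (insert a W)) ?_ S ?_)
        · intro Y hY hYcard
          have haY : a ∉ Y := fun h => (Finset.mem_erase.mp (hY h)).1 rfl
          have key := hf (insert a Y) (Finset.insert_subset haU (hY.trans (Finset.erase_subset _ _)))
            (by rw [Finset.card_insert_of_notMem haY]; omega)
          have er2 := erase_reindex d U a haU (fun W => Y ⊆ W) f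
          refine Eq.trans (Finset.sum_congr (by congr!) (fun _ _ => rfl))
            (er2.symm.trans (Eq.trans (Finset.sum_congr ?_ (fun _ _ => rfl)) key))
          ext Z
          simp only [Finset.mem_filter, Finset.insert_subset_iff]
          constructor
          · rintro ⟨h0, h1, h2⟩
            exact ⟨h0, h1, h2.trans (Finset.erase_subset _ _)⟩
          · rintro ⟨h0, h1, h2⟩
            refine ⟨h0, h1, fun i hi => Finset.mem_erase.mpr ⟨?_, h2 hi⟩⟩
            intro h
            exact haY (h ▸ hi)
        · intro i hi
          exact Finset.mem_erase.mpr ⟨fun h => haS' (by rwa [h] at hi), hSU hi⟩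
      have rhs : ∑ Z ∈ powersetCard (d+1) (insert a S), f Z
          = ∑ Z ∈ powersetCard (d+1) S, f Z + ∑ W ∈ powersetCard d S, f (insert a W) := by
        rw [Finset.powersetCard_succ_insert haS']
        rw [Finset.sum_union]
        · congr 1
          rw [Finset.sum_image]
          intro W hW W' hW' hins
          rw [Finset.mem_coe, Finset.mem_powersetCard] at hW hW'
          have : (insert a W).erase a = (insert a W').erase a := by rw [hins]
          rwa [Finset.erase_insert (fun h => haS' (hW.1 h)),
            Finset.erase_insert (fun h => haS' (hW'.1 h))] at this
        · rw [Finset.disjoint_left]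
          intro Z hZ hZ'
          rw [Finset.mem_powersetCard] at hZ
          obtain ⟨W, hW, rfl⟩ := Finset.mem_image.mp hZ'
          rw [Finset.mem_powersetCard] at hW
          exact haS' (hZ.1 (Finset.mem_insert_self a W))
      have IH' := IH hSU
      have goal_eq : ∑ Z ∈ (powersetCard (d+1) U).filter (fun Z => Disjoint Z (insert a S)), f Z
          = ∑ Z ∈ (powersetCard (d+1) U).filter (fun Z => Disjoint Z S), f Z
            - ∑ Z ∈ (powersetCard (d+1) U).filter (fun Z => a ∈ Z ∧ Disjoint (Z.erase a) S), f Z := by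
        rw [split]; ring
      rw [goal_eq, IH', part2, rhs]
      rw [pow_succ]
      ring

lemma count_super (d t : ℕ) (hdt : d ≤ t) (S Z : Finset (Fin n)) (hZd : Z.card = d)
    (hZS : Disjoint Z S) :
    ((powersetCard t (univ : Finset (Fin n))).filter
        (fun X => Disjoint X S ∧ Z ⊆ X)).card = (n - S.card - d).choose (t - d) := by
  have hcard : (((univ : Finset (Fin n)) \ S) \ Z).card = n - S.card - d := by
    rw [Finset.card_sdiff_of_subset, Finset.card_sdiff_of_subset] <;>
      simp [hZd, Finset.subset_sdiff, hZS, Finset.card_univ]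
  rw [← hcard, ← Finset.card_powersetCard]
  apply Finset.card_nbij' (fun X => X \ Z) (fun V => V ∪ Z)
  · intro X hX
    simp only [Finset.mem_coe, Finset.mem_filter, Finset.mem_powersetCard] at *
    refine ⟨?_, by rw [Finset.card_sdiff_of_subset hX.2.2, hX.1.2, hZd]⟩
    rw [Finset.subset_sdiff, Finset.subset_sdiff]
    exact ⟨⟨Finset.subset_univ _, Finset.disjoint_of_subset_left (Finset.sdiff_subset) hX.2.1⟩,
      Finset.sdiff_disjoint⟩
  · intro V hV
    simp only [Finset.mem_coe, Finset.mem_filter, Finset.mem_powersetCard, Finset.subset_sdiff] at *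
    refine ⟨⟨Finset.subset_univ _, ?_⟩, ?_, Finset.subset_union_right⟩
    · rw [Finset.card_union_of_disjoint hV.1.2.symm.symm, hV.2, hZd]
      omega
    · exact Finset.disjoint_union_left.mpr ⟨hV.1.1.2, hZS⟩
  · intro X hX
    simp only [Finset.mem_coe, Finset.mem_filter] at hX
    exact Finset.sdiff_union_of_subset hX.2.2
  · intro V hV
    simp only [Finset.mem_coe, Finset.mem_powersetCard, Finset.subset_sdiff] at hV
    exact Finset.union_sdiff_cancel_right hV.1.2

lemma count_lemma (d t : ℕ) (hdt : d ≤ t) (f : Finset (Fin n) → ℝ) (S : Finset (Fin n)) :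
    ∑ X ∈ (powersetCard t (univ : Finset (Fin n))).filter (fun X => Disjoint X S), tildeF d f X
      = ((n - S.card - d).choose (t - d) : ℝ) *
        ∑ Z ∈ (powersetCard d (univ : Finset (Fin n))).filter (fun Z => Disjoint Z S), f Z := by
  have expand : ∀ X ∈ (powersetCard t (univ : Finset (Fin n))).filter (fun X => Disjoint X S),
      tildeF d f X = ∑ Z ∈ powersetCard d (univ : Finset (Fin n)), if Z ⊆ X then f Z else 0 := by
    intro X _
    rw [tildeF, ← Finset.sum_filter, aux_pcc d _ X (Finset.subset_univ X)]
  rw [Finset.sum_congr rfl expand, Finset.sum_comm, Finset.mul_sum]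
  rw [← Finset.sum_filter_add_sum_filter_not (powersetCard d (univ : Finset (Fin n)))
    (fun Z => Disjoint Z S)]
  have h2 : ∑ Z ∈ (powersetCard d (univ : Finset (Fin n))).filter (fun Z => ¬ Disjoint Z S),
      ∑ X ∈ (powersetCard t (univ : Finset (Fin n))).filter (fun X => Disjoint X S),
        (if Z ⊆ X then f Z else 0) = 0 := by
    apply Finset.sum_eq_zero
    intro Z hZ
    apply Finset.sum_eq_zero
    intro X hX
    rw [Finset.mem_filter] at hZ hX
    rw [if_neg]
    intro hsub
    exact hZ.2 (Finset.disjoint_of_subset_left hsub hX.2)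
  rw [h2, add_zero]
  apply Finset.sum_congr rfl
  intro Z hZ
  rw [Finset.mem_filter, Finset.mem_powersetCard] at hZ
  rw [← Finset.sum_filter, Finset.filter_filter, Finset.sum_const,
    count_super d t hdt S Z hZ.1.2 hZ.2, nsmul_eq_mul]

lemma binom_lemma (d s : ℕ) (hds : d ≤ s) (hs : s ≤ n - d) (hdn : d ≤ n) (x y : ℝ) :
    ∑ t ∈ Finset.Icc d (n - d), ((n - s - d).choose (t - d) : ℝ) * (x - y) ^ (t - d) * y ^ (n - t - d)
      = x ^ (n - s - d) * y ^ (s - d) := by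
  have h2d : d + d ≤ n := by omega
  rw [← Finset.Ico_add_one_right_eq_Icc, Finset.sum_Ico_eq_sum_range]
  have hN : n - d + 1 - d = (n - d - d) + 1 := by omega
  rw [hN]
  set N := n - d - d with hNdef
  set m := n - s - d with hmdef
  have hmN : m ≤ N := by omega
  have step : ∀ j ∈ Finset.range (N + 1),
      ((m.choose (d + j - d) : ℝ) * (x - y) ^ (d + j - d) * y ^ (n - (d + j) - d))
        = (m.choose j : ℝ) * (x - y) ^ j * y ^ (N - j) := by
    intro j hj
    have e1 : d + j - d = j := by omega
    have e2 : n - (d + j) - d = N - j := by omega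
    rw [e1, e2]
  rw [Finset.sum_congr rfl step]
  rw [← Finset.sum_subset (Finset.range_subset_range.mpr (by omega : m + 1 ≤ N + 1))]
  · have step2 : ∀ j ∈ Finset.range (m + 1),
        (m.choose j : ℝ) * (x - y) ^ j * y ^ (N - j)
          = (x - y) ^ j * y ^ (m - j) * (m.choose j : ℝ) * y ^ (N - m) := by
      intro j hj
      rw [Finset.mem_range] at hj
      have e : N - j = (m - j) + (N - m) := by omega
      rw [e, pow_add]; ring
    rw [Finset.sum_congr rfl step2]
    have hap := add_pow (x - y) y m
    rw [sub_add_cancel] at hap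
    have e3 : s - d = N - m := by omega
    rw [e3, ← Finset.sum_mul, ← hap]
  · intro j hj hj2
    rw [Finset.mem_range] at hj hj2
    rw [Nat.choose_eq_zero_of_lt (by omega)]
    simp

lemma harm_S (d : ℕ) (f : Finset (Fin n) → ℝ)
    (hf : ∀ Y : Finset (Fin n), Y.card + 1 = d →
      ∑ Z ∈ (Finset.powersetCard d (Finset.univ : Finset (Fin n))).filter (fun Z => Y ⊆ Z), f Z = 0)
    (S : Finset (Fin n)) :
    ∑ Z ∈ (powersetCard d (univ : Finset (Fin n))).filter (fun Z => Disjoint Z S), f Z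
      = (-1 : ℝ) ^ d * tildeF d f S :=
  harm_key d univ f (fun Y _ h => hf Y h) S (Finset.subset_univ S)

lemma tilde_zero_lt (d : ℕ) (f : Finset (Fin n) → ℝ) (S : Finset (Fin n)) (h : S.card < d) :
    tildeF d f S = 0 := by
  rw [tildeF, Finset.powersetCard_eq_empty.mpr h, Finset.sum_empty]

lemma tilde_zero_gt (d : ℕ) (f : Finset (Fin n) → ℝ)
    (hf : ∀ Y : Finset (Fin n), Y.card + 1 = d →
      ∑ Z ∈ (Finset.powersetCard d (Finset.univ : Finset (Fin n))).filter (fun Z => Y ⊆ Z), f Z = 0)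
    (S : Finset (Fin n)) (h : n - d < S.card) :
    tildeF d f S = 0 := by
  have hkey := harm_S d f hf S
  have hempty : (powersetCard d (univ : Finset (Fin n))).filter (fun Z => Disjoint Z S) = ∅ := by
    rw [Finset.filter_eq_empty_iff]
    intro Z hZ hdis
    rw [Finset.mem_powersetCard] at hZ
    have hsub : Z ⊆ univ \ S := Finset.subset_sdiff.mpr ⟨hZ.1, hdis⟩
    have hle := Finset.card_le_card hsub
    rw [Finset.card_sdiff_of_subset (Finset.subset_univ S), Finset.card_univ, Fintype.card_fin, hZ.2] at hle
    have hSn : S.card ≤ n := by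
      have := Finset.card_le_card (Finset.subset_univ S)
      simpa [Finset.card_univ] using this
    omega
  rw [hempty, Finset.sum_empty] at hkey
  have hne : ((-1 : ℝ)) ^ d ≠ 0 := by simp
  field_simp at hkey
  exact (mul_eq_zero.mp hkey.symm).resolve_left hne

lemma le_codeVanish_iff (F : Type*) [Field F] [Fintype F] (C D : Submodule F (Fin n → F))
    (X : Finset (Fin n)) :
    D ≤ codeVanish F C X ↔ D ≤ C ∧ Disjoint (codeSupp F D) X := by
  constructor
  · intro h
    refine ⟨h.trans inf_le_left, ?_⟩
    rw [Finset.disjoint_left]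
    intro i hi hiX
    rw [codeSupp, Finset.mem_filter] at hi
    obtain ⟨-, u, hu, hui⟩ := hi
    have h2 := h hu
    rw [codeVanish, Submodule.mem_inf] at h2
    have h3 : u i ∈ (⊥ : Submodule F F) := h2.2 i (by exact hiX)
    exact hui (Submodule.mem_bot F |>.mp h3)
  · rintro ⟨h1, h2⟩
    intro u hu
    rw [codeVanish, Submodule.mem_inf]
    refine ⟨h1 hu, ?_⟩
    intro i hi
    show u i ∈ (⊥ : Submodule F F)
    rw [Submodule.mem_bot]
    by_contra hne
    have : i ∈ codeSupp F D := by
      rw [codeSupp, Finset.mem_filter]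
      exact ⟨Finset.mem_univ i, u, hu, hne⟩
    exact Finset.disjoint_left.mp h2 this hi

end Helpers

/-- `Z_{C,f}^{(r)}(x,y) = (-1)^d ∑_{t=d}^{n-d} B_{t,f}^{(r)}(C) (x-y)^{t-d} y^{n-t-d}`. -/
theorem stmt8 {n : ℕ} (F : Type*) [Field F] [Fintype F] (C : Submodule F (Fin n → F))
    (f : Finset (Fin n) → ℝ) (d r : ℕ) (hd : 1 ≤ d) (hf : IsHarmonic n d f)
    (hr : r ≤ Module.finrank F ↥C) :
    ∀ x y : ℝ,
      Zhigher F C f d r x y =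
        (-1 : ℝ) ^ d *
          ∑ t ∈ Finset.Icc d (n - d),
            Bhigher F C f d r t * (x - y) ^ (t - d) * y ^ (n - t - d) := by
  intro x y
  have hf' : ∀ Y : Finset (Fin n), Y.card + 1 = d →
      ∑ Z ∈ (Finset.powersetCard d (Finset.univ : Finset (Fin n))).filter
        (fun Z => Y ⊆ Z), f Z = 0 := hf
  set Dr : Finset (Submodule F (Fin n → F)) :=
    Finset.univ.filter (fun D => D ≤ C ∧ Module.finrank F ↥D = r) with hDr
  have hA : ∀ i ∈ Finset.Icc d (n - d),
      Ahigher F C f d r i * x ^ (n - i - d) * y ^ (i - d)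
        = ∑ D ∈ Dr.filter (fun D => (codeSupp F D).card = i),
            tildeF d f (codeSupp F D) * x ^ (n - (codeSupp F D).card - d)
              * y ^ ((codeSupp F D).card - d) := by
    intro i _
    rw [Ahigher, Finset.sum_mul, Finset.sum_mul]
    have hset : Finset.univ.filter (fun D : Submodule F (Fin n → F) =>
        D ≤ C ∧ Module.finrank F ↥D = r ∧ (codeSupp F D).card = i)
        = Dr.filter (fun D => (codeSupp F D).card = i) := by
      rw [hDr, Finset.filter_filter]
      apply Finset.filter_congr
      intro D _
      tauto
    rw [hset]
    apply Finset.sum_congr rfl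
    intro D hD
    rw [Finset.mem_filter] at hD
    rw [hD.2]
  have hL : Zhigher F C f d r x y
      = ∑ D ∈ Dr.filter (fun D => (codeSupp F D).card ∈ Finset.Icc d (n - d)),
          tildeF d f (codeSupp F D) * x ^ (n - (codeSupp F D).card - d)
            * y ^ ((codeSupp F D).card - d) := by
    rw [Zhigher, Finset.sum_congr rfl hA]
    exact Finset.sum_fiberwise_eq_sum_filter Dr (Finset.Icc d (n - d))
      (fun D => (codeSupp F D).card) _
  have hsc : ∀ X : Finset (Fin n), (subCount F (codeVanish F C X) r : ℝ)
      = ∑ D ∈ Dr, (if Disjoint X (codeSupp F D) then (1:ℝ) else 0) := by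
    intro X
    rw [Finset.sum_boole, subCount]
    norm_cast
    congr 1
    ext D
    simp only [hDr, Finset.mem_filter, Finset.mem_univ, true_and,
      le_codeVanish_iff]
    rw [disjoint_comm]
    tauto
  have hB : ∀ t ∈ Finset.Icc d (n - d),
      Bhigher F C f d r t
        = ∑ D ∈ Dr, ((n - (codeSupp F D).card - d).choose (t - d) : ℝ)
            * ((-1:ℝ)^d * tildeF d f (codeSupp F D)) := by
    intro t ht
    rw [Finset.mem_Icc] at ht
    rw [Bhigher]
    have e1 : ∀ X ∈ powersetCard t (univ : Finset (Fin n)),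
        tildeF d f X * (subCount F (codeVanish F C X) r : ℝ)
          = ∑ D ∈ Dr, (if Disjoint X (codeSupp F D) then tildeF d f X else 0) := by
      intro X _
      rw [hsc X, Finset.mul_sum]
      apply Finset.sum_congr rfl
      intro D _
      rw [mul_ite, mul_one, mul_zero]
    rw [Finset.sum_congr rfl e1, Finset.sum_comm]
    apply Finset.sum_congr rfl
    intro D _
    rw [← Finset.sum_filter]
    rw [count_lemma d t ht.1 f (codeSupp F D), harm_S d f hf' (codeSupp F D)]
  have hR : (-1 : ℝ)^d * ∑ t ∈ Finset.Icc d (n-d),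
        Bhigher F C f d r t * (x - y)^(t-d) * y^(n-t-d)
      = ∑ D ∈ Dr, tildeF d f (codeSupp F D) *
          ∑ t ∈ Finset.Icc d (n-d), ((n - (codeSupp F D).card - d).choose (t - d) : ℝ)
            * (x - y)^(t-d) * y^(n-t-d) := by
    have e2 : ∀ t ∈ Finset.Icc d (n-d),
        (-1:ℝ)^d * (Bhigher F C f d r t * (x - y)^(t-d) * y^(n-t-d))
          = ∑ D ∈ Dr, tildeF d f (codeSupp F D) *
              (((n - (codeSupp F D).card - d).choose (t - d) : ℝ)
                * (x - y)^(t-d) * y^(n-t-d)) := by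
      intro t ht
      rw [hB t ht, Finset.sum_mul, Finset.sum_mul, Finset.mul_sum]
      apply Finset.sum_congr rfl
      intro D _
      have h1 : ((-1:ℝ))^d * (-1:ℝ)^d = 1 := by
        rw [← pow_add]
        exact Even.neg_one_pow ⟨d, rfl⟩
      linear_combination (((n - (codeSupp F D).card - d).choose (t - d) : ℝ)
        * (x-y)^(t-d) * y^(n-t-d) * tildeF d f (codeSupp F D)) * h1
    rw [Finset.mul_sum, Finset.sum_congr rfl e2, Finset.sum_comm]
    apply Finset.sum_congr rfl
    intro D _
    rw [Finset.mul_sum]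
  rw [hL, hR, Finset.sum_filter]
  apply Finset.sum_congr rfl
  intro D _
  have hsn : (codeSupp F D).card ≤ n := by
    have := Finset.card_le_card (Finset.subset_univ (codeSupp F D))
    simpa [Finset.card_univ] using this
  by_cases h1 : (codeSupp F D).card < d
  · rw [if_neg (by simp only [Finset.mem_Icc]; omega),
      tilde_zero_lt d f (codeSupp F D) h1, zero_mul]
  by_cases h2 : n - d < (codeSupp F D).card
  · rw [if_neg (by simp only [Finset.mem_Icc]; omega),
      tilde_zero_gt d f hf' (codeSupp F D) h2, zero_mul]
  · push_neg at h1 h2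
    rw [if_pos (Finset.mem_Icc.mpr ⟨h1, h2⟩),
      binom_lemma d (codeSupp F D).card h1 h2 (by omega) x y]
    ring
end
end

section
/- Let M be a matroid on E = {1,...,n} with rank function ρ, and f ∈ Harm_d(n) with d ≥ 1. Define the harmonic Tutte polynomial T(M,f;x,y) := ∑_{X ⊆ E} f̃(X)(x-1)^{ρ(E)-ρ(X)}(y-1)^{|X|-ρ(X)}. Then T(M*,f;x,y) = (-1)^d · T(M,f;y,x), where M* is the dual matroid. -/
open Finset

noncomputable section
open scoped Classical

/-- The harmonic Tutte polynomial of a matroid given by its rank function `ρ`: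
`T(M,f;x,y) = ∑_{X ⊆ E} f̃(X) (x-1)^{ρ(E)-ρ(X)} (y-1)^{|X|-ρ(X)}`. -/
def harmTutte {n : ℕ} (ρ : Finset (Fin n) → ℕ) (d : ℕ) (f : Finset (Fin n) → ℝ)
    (x y : ℝ) : ℝ :=
  ∑ X ∈ (Finset.univ : Finset (Fin n)).powerset,
    tildeF d f X * (x - 1) ^ (ρ Finset.univ - ρ X) * (y - 1) ^ (X.card - ρ X)

/-- The rank function of the dual matroid: `ρ*(X) = |X| + ρ(E \ X) - ρ(E)`. -/
def dualRank {n : ℕ} (ρ : Finset (Fin n) → ℕ) (X : Finset (Fin n)) : ℕ :=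
  X.card + ρ (Finset.univ \ X) - ρ Finset.univ

lemma sum_superset_zero {n d : ℕ} (f : Finset (Fin n) → ℝ) (hf : IsHarmonic n d f) :
    ∀ m : ℕ, 1 ≤ m → ∀ S : Finset (Fin n), S.card + m = d →
      ∑ Z ∈ (Finset.powersetCard d (Finset.univ : Finset (Fin n))).filter (fun Z => S ⊆ Z), f Z = 0 := by
  intro m
  induction m with
  | zero => intro h; omega
  | succ m ih =>
    intro _ S hS
    rcases Nat.eq_zero_or_pos m with h0 | hm
    · subst h0; exact hf S (by omega)
    · set P := (Finset.powersetCard d (Finset.univ : Finset (Fin n))) with hP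
      set A := (Finset.powersetCard (S.card + 1) (Finset.univ : Finset (Fin n))).filter
        (fun Y => S ⊆ Y) with hA
      have key : ∀ Y ∈ A, ∑ Z ∈ P.filter (fun Z => Y ⊆ Z), f Z = 0 := by
        intro Y hY
        rw [hA, mem_filter, mem_powersetCard] at hY
        exact ih hm Y (by omega)
      have h0 : ∑ Y ∈ A, ∑ Z ∈ P.filter (fun Z => Y ⊆ Z), f Z = 0 :=
        Finset.sum_eq_zero key
      have h1 : ∑ Y ∈ A, ∑ Z ∈ P.filter (fun Z => Y ⊆ Z), f Z
          = ∑ Z ∈ P, ((A.filter (fun Y => Y ⊆ Z)).card : ℝ) * f Z := by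
        simp_rw [Finset.sum_filter]
        rw [Finset.sum_comm]
        refine Finset.sum_congr rfl fun Z _ => ?_
        rw [← Finset.sum_filter, Finset.sum_const, nsmul_eq_mul]
      have h2 : ∀ Z ∈ P, ((A.filter (fun Y => Y ⊆ Z)).card : ℝ) * f Z
          = ((m : ℝ) + 1) * (if S ⊆ Z then f Z else 0) := by
        intro Z hZ
        rw [hP, mem_powersetCard] at hZ
        by_cases hSZ : S ⊆ Z
        · rw [if_pos hSZ]
          have himg : A.filter (fun Y => Y ⊆ Z) = (Z \ S).image (fun e => insert e S) := by
            ext Y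
            simp only [hA, mem_filter, mem_powersetCard, mem_image, mem_sdiff, filter_filter]
            constructor
            · rintro ⟨⟨-, hcard⟩, hSY, hYZ⟩
              have : (Y \ S).card = 1 := by
                rw [card_sdiff_of_subset hSY]; omega
              obtain ⟨e, he⟩ := Finset.card_eq_one.mp this
              refine ⟨e, ⟨hYZ (by
                have : e ∈ Y \ S := he ▸ mem_singleton_self e
                exact (mem_sdiff.mp this).1), by
                have : e ∈ Y \ S := he ▸ mem_singleton_self e
                exact (mem_sdiff.mp this).2⟩, ?_⟩
              have heY : e ∈ Y := by
                have : e ∈ Y \ S := he ▸ mem_singleton_self e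
                exact (mem_sdiff.mp this).1
              have heS' : e ∉ S := by
                have : e ∈ Y \ S := he ▸ mem_singleton_self e
                exact (mem_sdiff.mp this).2
              refine (Finset.eq_of_subset_of_card_le (Finset.insert_subset heY hSY) ?_)
              rw [Finset.card_insert_of_notMem heS']
              omega
            · rintro ⟨e, ⟨heZ, heS⟩, rfl⟩
              refine ⟨⟨Finset.subset_univ _, ?_⟩, Finset.subset_insert _ _, ?_⟩
              · rw [Finset.card_insert_of_notMem heS]
              · exact Finset.insert_subset heZ hSZ
          rw [himg, Finset.card_image_of_injOn, card_sdiff_of_subset hSZ, hZ.2]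
          · have : (d - S.card : ℕ) = m + 1 := by omega
            rw [this]; push_cast; ring
          · intro a ha b hb hab
            simp only [Finset.mem_coe, Finset.mem_sdiff] at ha hb
            simp only at hab
            have : a ∈ insert b S := hab ▸ Finset.mem_insert_self a S
            rcases Finset.mem_insert.mp this with h | h
            · exact h
            · exact absurd h ha.2
        · rw [if_neg hSZ]
          have : A.filter (fun Y => Y ⊆ Z) = ∅ := by
            rw [Finset.filter_eq_empty_iff]
            intro Y hY
            rw [hA, mem_filter] at hY
            intro hYZ
            exact hSZ (hY.2.trans hYZ)
          rw [this]; simp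
      rw [h1, Finset.sum_congr rfl h2, ← Finset.mul_sum, ← Finset.sum_filter] at h0
      have hne : ((m : ℝ) + 1) ≠ 0 := by positivity
      exact (mul_eq_zero.mp h0).resolve_left hne

lemma neg_one_pow_sum {α : Type*} [DecidableEq α] (X : Finset α) :
    ∑ S ∈ X.powerset, (-1 : ℝ) ^ S.card = if X = ∅ then 1 else 0 := by
  have h := Finset.sum_powerset_neg_one_pow_card (x := X)
  calc ∑ S ∈ X.powerset, (-1 : ℝ) ^ S.card
      = ((∑ S ∈ X.powerset, (-1 : ℤ) ^ S.card : ℤ) : ℝ) := by push_cast; rfl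
    _ = _ := by rw [h]; split_ifs <;> simp

lemma tildeF_compl {n d : ℕ} (hd : 1 ≤ d) (f : Finset (Fin n) → ℝ) (hf : IsHarmonic n d f)
    (Y : Finset (Fin n)) :
    tildeF d f (Finset.univ \ Y) = (-1 : ℝ) ^ d * tildeF d f Y := by
  have h1 : Finset.powersetCard d ((Finset.univ : Finset (Fin n)) \ Y)
      = (Finset.powersetCard d (Finset.univ : Finset (Fin n))).filter (fun Z => Z ∩ Y = ∅) := by
    ext Z
    rw [mem_powersetCard, mem_filter, mem_powersetCard, Finset.subset_sdiff,
      Finset.disjoint_iff_inter_eq_empty]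
    tauto
  rw [tildeF, h1, Finset.sum_filter]
  have h2 : ∀ Z ∈ Finset.powersetCard d (Finset.univ : Finset (Fin n)),
      (if Z ∩ Y = ∅ then f Z else 0)
        = ∑ S ∈ Y.powerset.filter (fun S => S ⊆ Z), (-1 : ℝ) ^ S.card * f Z := by
    intro Z _
    have : Y.powerset.filter (fun S => S ⊆ Z) = (Z ∩ Y).powerset := by
      ext S
      simp only [mem_filter, mem_powerset, Finset.subset_inter_iff]
      tauto
    rw [this, ← Finset.sum_mul, neg_one_pow_sum]
    by_cases h : Z ∩ Y = ∅ <;> simp [h]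
  rw [Finset.sum_congr rfl h2]
  simp_rw [Finset.sum_filter]
  rw [Finset.sum_comm]
  have h3 : ∀ S ∈ Y.powerset,
      (∑ Z ∈ Finset.powersetCard d (Finset.univ : Finset (Fin n)),
        if S ⊆ Z then (-1 : ℝ) ^ S.card * f Z else 0)
      = if S.card = d then (-1 : ℝ) ^ d * f S else 0 := by
    intro S hS
    rw [← Finset.sum_filter]
    rcases lt_trichotomy S.card d with h | h | h
    · rw [if_neg (by omega)]
      have := sum_superset_zero f hf (d - S.card) (by omega) S (by omega)
      calc ∑ Z ∈ (Finset.powersetCard d (Finset.univ : Finset (Fin n))).filter (fun Z => S ⊆ Z),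
            (-1 : ℝ) ^ S.card * f Z
          = (-1 : ℝ) ^ S.card * ∑ Z ∈ (Finset.powersetCard d (Finset.univ : Finset (Fin n))).filter
              (fun Z => S ⊆ Z), f Z := by rw [Finset.mul_sum]
        _ = 0 := by rw [this, mul_zero]
    · rw [if_pos h]
      have : (Finset.powersetCard d (Finset.univ : Finset (Fin n))).filter (fun Z => S ⊆ Z) = {S} := by
        ext Z
        simp only [mem_filter, mem_powersetCard, Finset.mem_singleton]
        constructor
        · rintro ⟨⟨-, hc⟩, hSZ⟩
          exact (Finset.eq_of_subset_of_card_le hSZ (by omega)).symm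
        · rintro rfl
          exact ⟨⟨Finset.subset_univ _, h⟩, Finset.Subset.refl _⟩
      rw [this, Finset.sum_singleton, ← h]
    · rw [if_neg (by omega)]
      have : (Finset.powersetCard d (Finset.univ : Finset (Fin n))).filter (fun Z => S ⊆ Z) = ∅ := by
        rw [Finset.filter_eq_empty_iff]
        intro Z hZ hSZ
        rw [mem_powersetCard] at hZ
        have := Finset.card_le_card hSZ
        omega
      rw [this, Finset.sum_empty]
  rw [Finset.sum_congr rfl h3, Finset.sum_ite, Finset.sum_const_zero, add_zero, ← Finset.mul_sum]
  congr 1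
  rw [tildeF, Finset.powersetCard_eq_filter]

/-- For a matroid `M` on `E = {1,…,n}` with rank function `ρ` and `f ∈ Harm_d(n)` with
`d ≥ 1`, the harmonic Tutte polynomial satisfies `T(M*,f;x,y) = (-1)^d T(M,f;y,x)`. -/
theorem stmt12 {n : ℕ} (d : ℕ) (hd : 1 ≤ d) (f : Finset (Fin n) → ℝ)
    (hf : IsHarmonic n d f) (ρ : Finset (Fin n) → ℕ)
    (hρ0 : ρ ∅ = 0)
    (hρcard : ∀ X, ρ X ≤ X.card)
    (hmono : ∀ X Y, X ⊆ Y → ρ X ≤ ρ Y)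
    (hsub : ∀ X Y, ρ (X ∪ Y) + ρ (X ∩ Y) ≤ ρ X + ρ Y) :
    ∀ x y : ℝ,
      harmTutte (dualRank ρ) d f x y = (-1 : ℝ) ^ d * harmTutte ρ d f y x := by
  intro x y
  rw [harmTutte, harmTutte, Finset.mul_sum, Finset.powerset_univ]
  have hinv : Function.Involutive (fun X : Finset (Fin n) => (univ : Finset (Fin n)) \ X) := by
    intro X; simp only; rw [Finset.sdiff_sdiff_self_left, Finset.univ_inter]
  refine Fintype.sum_bijective _ hinv.bijective _ _ fun X => ?_
  set C := (univ : Finset (Fin n)) \ X with hC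
  have hXC : (univ : Finset (Fin n)) \ C = X := hinv X
  have htf : tildeF d f X = (-1 : ℝ) ^ d * tildeF d f C := by
    have h := tildeF_compl hd f hf C
    rw [hXC] at h; exact h
  have hcC : C.card = n - X.card := by
    rw [hC, Finset.card_sdiff_of_subset (Finset.subset_univ X), Finset.card_univ, Fintype.card_fin]
  have h1 : ρ C ≤ ρ univ := hmono _ _ (by rw [hC]; exact Finset.sdiff_subset)
  have h2 : ρ C ≤ C.card := hρcard C
  have h3 : ρ univ ≤ X.card + ρ C := by
    have hs := hsub X C
    have hu : X ∪ C = univ := by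
      rw [hC, Finset.union_sdiff_of_subset (Finset.subset_univ X)]
    have hi : X ∩ C = ∅ := by rw [hC]; simp
    rw [hu, hi, hρ0] at hs
    have := hρcard X
    omega
  have hXn : X.card ≤ n := by
    have := Finset.card_le_univ X
    simpa using this
  have e1 : dualRank ρ univ - dualRank ρ X = C.card - ρ C := by
    simp only [dualRank, ← hC, Finset.sdiff_self, hρ0, Finset.card_univ, Fintype.card_fin]
    omega
  have e2 : X.card - dualRank ρ X = ρ univ - ρ C := by
    simp only [dualRank, ← hC]
    omega
  rw [e1, e2, htf]
  ring
end
end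

section
/- (Delsarte's characterization of designs) Let 0 ≤ t ≤ i ≤ n and let B be a collection of i-subsets of E = {1,...,n}. Then B is a t-design if and only if for every d with 1 ≤ d ≤ t and every f ∈ Harm_d(n), ∑_{B ∈ B} ∑_{A ∈ E_d, A ⊆ B} f(A) = 0. -/
open Finset

noncomputable section
open scoped Classical

lemma L1 {n : ℕ} (k : ℕ) (X : Finset (Fin n)) :
    (Finset.powersetCard k (Finset.univ : Finset (Fin n))).filter (fun A => A ⊆ X)
      = Finset.powersetCard k X := by
  ext A
  simp [Finset.mem_powersetCard, and_comm]

lemma L2 {α : Type*} [DecidableEq α] (Y X : Finset α) (m : ℕ) (hYX : Y ⊆ X)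
    (hm : Y.card ≤ m) :
    ((Finset.powersetCard m X).filter (fun Z => Y ⊆ Z)).card
      = (X.card - Y.card).choose (m - Y.card) := by
  rw [← Finset.card_sdiff_of_subset hYX, ← Finset.card_powersetCard]
  apply Finset.card_bij' (fun Z _ => Z \ Y) (fun W _ => W ∪ Y)
  · intro Z hZ
    simp only [Finset.mem_filter, Finset.mem_powersetCard] at hZ ⊢
    exact ⟨Finset.sdiff_subset_sdiff hZ.1.1 le_rfl,
      by rw [Finset.card_sdiff_of_subset hZ.2, hZ.1.2]⟩
  · intro W hW
    simp only [Finset.mem_filter, Finset.mem_powersetCard] at hW ⊢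
    have hd : Disjoint W Y := Finset.disjoint_of_subset_left hW.1 (Finset.sdiff_disjoint)
    constructor
    · constructor
      · exact Finset.union_subset (hW.1.trans (Finset.sdiff_subset)) hYX
      · rw [Finset.card_union_of_disjoint hd, hW.2]
        omega
    · exact Finset.subset_union_right
  · intro Z hZ
    simp only [Finset.mem_filter] at hZ
    exact Finset.sdiff_union_of_subset hZ.2
  · intro W hW
    simp only [Finset.mem_powersetCard] at hW
    have hd : Disjoint W Y := Finset.disjoint_of_subset_left hW.1 (Finset.sdiff_disjoint)
    exact Finset.union_sdiff_cancel_right hd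

/-- count of supersets of `Y` of size `m` in the universe. -/
lemma L2u {n : ℕ} (Y : Finset (Fin n)) (m : ℕ) (hm : Y.card ≤ m) :
    ((Finset.powersetCard m (Finset.univ : Finset (Fin n))).filter (fun Z => Y ⊆ Z)).card
      = (n - Y.card).choose (m - Y.card) := by
  rw [L2 Y Finset.univ m (Finset.subset_univ Y) hm, Finset.card_univ, Fintype.card_fin]

/-- The swap lemma. -/
lemma L3 {n : ℕ} (d : ℕ) (g : Finset (Fin n) → ℝ) (B : Multiset (Finset (Fin n))) :
    (B.map (fun X => ∑ A ∈ Finset.powersetCard d X, g A)).sum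
      = ∑ A ∈ Finset.powersetCard d (Finset.univ : Finset (Fin n)),
          (B.countP (fun X => A ⊆ X) : ℝ) * g A := by
  induction B using Multiset.induction with
  | empty => simp
  | cons X B ih =>
    rw [Multiset.map_cons, Multiset.sum_cons, ih]
    have hcnt : ∀ A : Finset (Fin n), ((X ::ₘ B).countP (fun X' => A ⊆ X') : ℝ)
        = (if A ⊆ X then (1:ℝ) else 0) + (B.countP (fun X' => A ⊆ X') : ℝ) := by
      intro A
      rw [Multiset.countP_cons]
      split <;> push_cast <;> ring
    simp only [hcnt, add_mul]
    rw [Finset.sum_add_distrib]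
    congr 1
    simp only [ite_mul, one_mul, zero_mul]
    rw [← Finset.sum_filter, L1]

/-- a harmonic function of positive degree sums to zero. -/
lemma L4 {n : ℕ} (d : ℕ) (hd : 1 ≤ d) (f : Finset (Fin n) → ℝ) (hf : IsHarmonic n d f) :
    ∑ Z ∈ Finset.powersetCard d (Finset.univ : Finset (Fin n)), f Z = 0 := by
  have key : ∑ Y ∈ Finset.powersetCard (d-1) (Finset.univ : Finset (Fin n)),
      ∑ Z ∈ (Finset.powersetCard d (Finset.univ : Finset (Fin n))).filter
        (fun Z => Y ⊆ Z), f Z = 0 := by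
    apply Finset.sum_eq_zero
    intro Y hY
    rw [Finset.mem_powersetCard] at hY
    exact hf Y (by omega)
  have key2 : ∑ Y ∈ Finset.powersetCard (d-1) (Finset.univ : Finset (Fin n)),
      ∑ Z ∈ (Finset.powersetCard d (Finset.univ : Finset (Fin n))).filter
        (fun Z => Y ⊆ Z), f Z
      = ∑ Z ∈ Finset.powersetCard d (Finset.univ : Finset (Fin n)), (d:ℝ) * f Z := by
    simp only [Finset.sum_filter]
    rw [Finset.sum_comm]
    apply Finset.sum_congr rfl
    intro Z hZ
    rw [Finset.mem_powersetCard] at hZ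
    rw [Finset.sum_ite, Finset.sum_const, Finset.sum_const_zero, add_zero, nsmul_eq_mul]
    congr 1
    rw [L1, Finset.card_powersetCard, hZ.2, Nat.choose_symm hd, Nat.choose_one_right]
  rw [key2] at key
  rw [← Finset.mul_sum] at key
  have : (d:ℝ) ≠ 0 := by positivity
  exact (mul_eq_zero.mp key).resolve_left this

/-- down relation: summing counts over supersets. -/
lemma L5 {n i : ℕ} (_hin : i ≤ n) (Y : Finset (Fin n)) (_hYi : Y.card + 1 ≤ i)
    (B : Multiset (Finset (Fin n))) (hB : ∀ X ∈ B, X.card = i) :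
    ∑ Z ∈ (Finset.powersetCard (Y.card + 1) (Finset.univ : Finset (Fin n))).filter
        (fun Z => Y ⊆ Z), (B.countP (fun X => Z ⊆ X) : ℝ)
      = ((i - Y.card : ℕ) : ℝ) * (B.countP (fun X => Y ⊆ X) : ℝ) := by
  induction B using Multiset.induction with
  | empty => simp
  | cons X B ih =>
    have hX : X.card = i := hB X (Multiset.mem_cons_self _ _)
    have hB' : ∀ X' ∈ B, X'.card = i := fun X' h => hB X' (Multiset.mem_cons_of_mem h)
    have hone : ∑ Z ∈ (Finset.powersetCard (Y.card + 1)
          (Finset.univ : Finset (Fin n))).filter (fun Z => Y ⊆ Z),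
        (if Z ⊆ X then (1:ℝ) else 0)
        = ((i - Y.card : ℕ) : ℝ) * (if Y ⊆ X then (1:ℝ) else 0) := by
      rw [Finset.sum_ite, Finset.sum_const, Finset.sum_const_zero, add_zero, nsmul_eq_mul,
        mul_one]
      have hset : ((Finset.powersetCard (Y.card + 1)
            (Finset.univ : Finset (Fin n))).filter (fun Z => Y ⊆ Z)).filter
            (fun Z => Z ⊆ X)
          = (Finset.powersetCard (Y.card + 1) X).filter (fun Z => Y ⊆ Z) := by
        ext Z
        simp only [Finset.mem_filter, Finset.mem_powersetCard]
        constructor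
        · rintro ⟨⟨⟨-, h2⟩, h3⟩, h4⟩
          exact ⟨⟨h4, h2⟩, h3⟩
        · rintro ⟨⟨h1, h2⟩, h3⟩
          exact ⟨⟨⟨Finset.subset_univ _, h2⟩, h3⟩, h1⟩
      rw [hset]
      by_cases hYX : Y ⊆ X
      · rw [L2 Y X (Y.card + 1) hYX (by omega), hX, if_pos hYX, mul_one]
        simp
      · rw [if_neg hYX, mul_zero]
        have : ((Finset.powersetCard (Y.card + 1) X).filter (fun Z => Y ⊆ Z)) = ∅ := by
          apply Finset.filter_eq_empty_iff.mpr
          intro Z hZ hYZ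
          rw [Finset.mem_powersetCard] at hZ
          exact hYX (hYZ.trans hZ.1)
        rw [this]
        simp
    have hcnt : ∀ A : Finset (Fin n), ((X ::ₘ B).countP (fun X' => A ⊆ X') : ℝ)
        = (if A ⊆ X then (1:ℝ) else 0) + (B.countP (fun X' => A ⊆ X') : ℝ) := by
      intro A
      rw [Multiset.countP_cons]
      split <;> push_cast <;> ring
    simp only [hcnt]
    rw [Finset.sum_add_distrib, ih hB', hone, mul_add]

/-- Delsarte's characterization of designs: a collection `B` of `i`-subsets of `{1,…,n}`
(possibly with repeated blocks) is a `t`-design iff for every `1 ≤ d ≤ t` and every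
`f ∈ Harm_d(n)`, `∑_{B ∈ B} ∑_{A ∈ E_d, A ⊆ B} f(A) = 0`. -/
theorem stmt19 (n t i : ℕ) (hti : t ≤ i) (hin : i ≤ n)
    (B : Multiset (Finset (Fin n))) (hB : ∀ X ∈ B, X.card = i) :
    (∃ lam : ℕ, ∀ T : Finset (Fin n), T.card = t →
        Multiset.countP (fun X => T ⊆ X) B = lam) ↔
      ∀ d, 1 ≤ d → d ≤ t → ∀ f : Finset (Fin n) → ℝ, IsHarmonic n d f →
        (B.map (fun X => ∑ A ∈ Finset.powersetCard d X, f A)).sum = 0 := by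
  constructor
  · rintro ⟨lam, hlam⟩ d hd1 hdt f hf
    -- constancy at all levels below t
    have const : ∀ k : ℕ, ∃ c : ℝ, ∀ A : Finset (Fin n), A.card + k = t →
        (B.countP (fun X => A ⊆ X) : ℝ) = c := by
      intro k
      induction k with
      | zero =>
        exact ⟨(lam : ℝ), fun A hA => by rw [hlam A (by omega)]⟩
      | succ k ih =>
        obtain ⟨c, hc⟩ := ih
        refine ⟨((n - (t - (k+1)) : ℕ) : ℝ) * c / ((i - (t - (k+1)) : ℕ) : ℝ), ?_⟩
        intro A hA
        have hAc : A.card = t - (k+1) := by omega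
        have h5 := L5 hin A (by omega) B hB
        have hval : ∑ Z ∈ (Finset.powersetCard (A.card + 1)
              (Finset.univ : Finset (Fin n))).filter (fun Z => A ⊆ Z),
            (B.countP (fun X => Z ⊆ X) : ℝ)
            = ∑ Z ∈ (Finset.powersetCard (A.card + 1)
              (Finset.univ : Finset (Fin n))).filter (fun Z => A ⊆ Z), c := by
          apply Finset.sum_congr rfl
          intro Z hZ
          rw [Finset.mem_filter, Finset.mem_powersetCard] at hZ
          exact hc Z (by omega)
        rw [hval, Finset.sum_const, L2u A (A.card + 1) (by omega), nsmul_eq_mul] at h5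
        have hchoose : (n - A.card).choose (A.card + 1 - A.card) = n - A.card := by
          simp
        rw [hchoose, hAc] at h5
        have hipos : (1:ℝ) ≤ ((i - (t - (k+1)) : ℕ) : ℝ) := by
          have : 1 ≤ i - (t - (k+1)) := by omega
          exact_mod_cast this
        have hne : ((i - (t - (k+1)) : ℕ) : ℝ) ≠ 0 := by linarith
        rw [eq_div_iff hne]
        linear_combination -h5
    obtain ⟨c, hc⟩ := const (t - d)
    rw [L3]
    have : ∑ A ∈ Finset.powersetCard d (Finset.univ : Finset (Fin n)),
        (B.countP (fun X => A ⊆ X) : ℝ) * f A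
        = ∑ A ∈ Finset.powersetCard d (Finset.univ : Finset (Fin n)), c * f A := by
      apply Finset.sum_congr rfl
      intro A hA
      rw [Finset.mem_powersetCard] at hA
      rw [hc A (by omega)]
    rw [this, ← Finset.mul_sum, L4 d hd1 f hf, mul_zero]
  · intro h
    have const : ∀ d : ℕ, d ≤ t → ∃ c : ℝ, ∀ A : Finset (Fin n), A.card = d →
        (B.countP (fun X => A ⊆ X) : ℝ) = c := by
      intro d
      induction d with
      | zero =>
        intro _
        refine ⟨(B.countP (fun X => (∅ : Finset (Fin n)) ⊆ X) : ℝ), fun A hA => ?_⟩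
        rw [Finset.card_eq_zero.mp hA]
      | succ d ih =>
        intro hdt
        obtain ⟨c, hc⟩ := ih (by omega)
        set c' : ℝ := ((i - d : ℕ) : ℝ) * c / ((n - d : ℕ) : ℝ) with hc'
        have hnd : (1:ℝ) ≤ ((n - d : ℕ) : ℝ) := by
          have : 1 ≤ n - d := by omega
          exact_mod_cast this
        set M : Finset (Fin n) → ℝ := fun Z => (B.countP (fun X => Z ⊆ X) : ℝ) - c'
          with hM
        have hMh : IsHarmonic n (d+1) M := by
          intro Y hY
          have hYd : Y.card = d := by omega
          have h5 := L5 hin Y (by omega) B hB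
          rw [show Y.card + 1 = d + 1 from by omega] at h5
          simp only [hM]
          rw [Finset.sum_sub_distrib, h5, Finset.sum_const, L2u Y (d+1) (by omega),
            nsmul_eq_mul, hYd]
          have hchoose : (n - d).choose (d + 1 - d) = n - d := by simp
          rw [hchoose, hc Y hYd, hc']
          field_simp
          ring
        have h1 := h (d+1) (by omega) hdt M hMh
        rw [L3] at h1
        have h2 := L4 (d+1) (by omega) M hMh
        have h3 : ∑ A ∈ Finset.powersetCard (d+1) (Finset.univ : Finset (Fin n)),
            M A * M A = 0 := by
          have hrw : ∀ A : Finset (Fin n), (B.countP (fun X => A ⊆ X) : ℝ) * M A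
              = M A * M A + c' * M A := by
            intro A
            simp only [hM]
            ring
          rw [Finset.sum_congr rfl (fun A _ => hrw A), Finset.sum_add_distrib,
            ← Finset.mul_sum, h2, mul_zero, add_zero] at h1
          exact h1
        refine ⟨c', fun A hA => ?_⟩
        have hmem : A ∈ Finset.powersetCard (d+1) (Finset.univ : Finset (Fin n)) := by
          rw [Finset.mem_powersetCard]
          exact ⟨Finset.subset_univ _, hA⟩
        have hz := (Finset.sum_eq_zero_iff_of_nonneg
          (fun A _ => mul_self_nonneg (M A))).mp h3 A hmem
        have hMA : M A = 0 := by
          exact mul_self_eq_zero.mp hz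
        simp only [hM, sub_eq_zero] at hMA
        exact hMA
    obtain ⟨c, hc⟩ := const t le_rfl
    obtain ⟨T0, hT0sub, hT0⟩ := Finset.exists_subset_card_eq
      (show t ≤ (Finset.univ : Finset (Fin n)).card by
        rw [Finset.card_univ, Fintype.card_fin]; omega)
    refine ⟨B.countP (fun X => T0 ⊆ X), fun T hT => ?_⟩
    have := (hc T hT).trans (hc T0 hT0).symm
    exact_mod_cast this
end
end
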